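/- (Main bound.) Let φ : X → Z be L-Lipschitz and h : Z → {0,1} a classifier, and suppose: (i) there exist β ≥ 0 and a measurable set B ⊆ Z such that p_T^φ is absolutely continuous with respect to p_S^φ on B with density ratio dp_T^φ/dp_S^φ(z) ≤ 1+β for all z ∈ B, and p_T^φ(B) ≥ 1−δ_1; (ii) there exist disjoint sets C_0, C_1 ⊆ X with p_S(C_0 ∪ C_1) ≥ 1−δ_2, f(x) = i for all x ∈ C_i (i = 0,1), and inf{d_Z(z_0, z_1) : z_0 ∈ φ(C_0), z_1 ∈ φ(C_1)} ≥ Δ > 0; (iii) (connectedness from target to source) for any sets B_S, B_T ⊆ X with p_S(B_S) ≥ 1−δ_2 and p_T(B_T) ≥ 1−δ_1−(1+β)δ_2, there exists C_T ⊆ B_T with p_T(C_T) ≥ 1−δ_3 such that for every x ∈ C_T there is x' ∈ C_T ∩ B_S with f(x') = f(x) and a finite sequence x_0, x_1, …, x_m ∈ C_T with x_0 = x, x_m = x', and d_X(x_{i−1}, x_i) < Δ/L for all i = 1,…,m. Then the target risk is bounded by E_T(φ,h) ≤ (1+β) E_S(φ,h) + 3δ_1 + 2(1+β)δ_2 + δ_3.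 -/

import Mathlib

open MeasureTheory

/-- If a probability measure gives mass `≥ 1 - ε` to a set `S`, then any measurable
set disjoint from `S` has mass at most `ε`. -/
lemma aux_compl {X : Type*} [MeasurableSpace X] (μ : Measure X) [IsProbabilityMeasure μ]
    {S M : Set X} (hM : MeasurableSet M) (hdisj : ∀ x ∈ S, x ∉ M) {ε : ℝ}
    (hε : 0 ≤ ε) (hS : ENNReal.ofReal (1 - ε) ≤ μ S) : μ M ≤ ENNReal.ofReal ε := by
  by_cases h1 : 1 ≤ ε
  · exact prob_le_one.trans (ENNReal.one_le_ofReal.2 h1)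
  · push_neg at h1
    have hSM : S ⊆ Mᶜ := fun x hx => hdisj x hx
    have hkey : μ M + ENNReal.ofReal (1 - ε) ≤ ENNReal.ofReal ε + ENNReal.ofReal (1 - ε) := by
      calc μ M + ENNReal.ofReal (1 - ε) ≤ μ M + μ Mᶜ :=
            add_le_add_right (hS.trans (measure_mono hSM)) _
        _ = 1 := by rw [measure_add_measure_compl hM]; exact measure_univ
        _ ≤ ENNReal.ofReal ε + ENNReal.ofReal (1 - ε) := by
            rw [← ENNReal.ofReal_add hε (by linarith)]
            rw [show ε + (1 - ε) = 1 by ring]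
            simp
    exact (ENNReal.add_le_add_iff_right ENNReal.ofReal_ne_top).1 hkey

/-- **Theorem 1 of the paper, main bound.** Under
(1) `L`-Lipschitzness of `φ`, (2) imperfect asymmetrically-relaxed distribution alignment
(density ratio of `pT.map φ` w.r.t. `pS.map φ` bounded by `1+β` on a set `B` of
target-pushforward mass `≥ 1−δ1`), (3) separation of the source domain in latent space
(disjoint label-pure sets `C0, C1` of source mass `≥ 1−δ2` whose images are `Δ`-separated),
and the connectedness-from-target-to-source assumption, the target risk is bounded by
`(1+β)·E_S + 3δ1 + 2(1+β)δ2 + δ3`. -/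
theorem target_risk_main_bound
    {X Z : Type*} [MetricSpace X] [MetricSpace Z]
    [MeasurableSpace X] [BorelSpace X] [MeasurableSpace Z] [BorelSpace Z]
    (pS pT : Measure X) [IsProbabilityMeasure pS] [IsProbabilityMeasure pT]
    (f : X → ℝ) (hf : Measurable f) (hf01 : ∀ x, f x = 0 ∨ f x = 1)
    (φ : X → Z) (hφ : Measurable φ)
    (h : Z → ℝ) (hh : Measurable h) (hh01 : ∀ z, h z = 0 ∨ h z = 1)
    (L β Δ δ1 δ2 δ3 : ℝ) (hβ : 0 ≤ β) (hΔ : 0 < Δ)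
    -- (1) Lipschitzness of the representation mapping
    (hLip : ∀ x1 x2, dist (φ x1) (φ x2) ≤ L * dist x1 x2)
    -- (2) imperfect asymmetrically-relaxed distribution alignment
    (B : Set Z) (hB : MeasurableSet B)
    (hratio : (pT.map φ).restrict B ≤ ENNReal.ofReal (1 + β) • (pS.map φ).restrict B)
    (hBmass : ENNReal.ofReal (1 - δ1) ≤ pT.map φ B)
    -- (3) separation of the source domain in the latent space
    (C0 C1 : Set X) (hdisj : Disjoint C0 C1)
    (hCmass : ENNReal.ofReal (1 - δ2) ≤ pS (C0 ∪ C1))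
    (hC0 : ∀ x ∈ C0, f x = 0) (hC1 : ∀ x ∈ C1, f x = 1)
    (hsep : ∀ x0 ∈ C0, ∀ x1 ∈ C1, Δ ≤ dist (φ x0) (φ x1))
    -- connectedness from target domain to source domain
    (hconn : ∀ BS BT : Set X,
      ENNReal.ofReal (1 - δ2) ≤ pS BS →
      ENNReal.ofReal (1 - δ1 - (1 + β) * δ2) ≤ pT BT →
      ∃ CT ⊆ BT, ENNReal.ofReal (1 - δ3) ≤ pT CT ∧
        ∀ x ∈ CT, ∃ x' ∈ CT ∩ BS, f x' = f x ∧
          ∃ (m : ℕ) (c : ℕ → X), c 0 = x ∧ c m = x' ∧ (∀ i ≤ m, c i ∈ CT) ∧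
            ∀ i < m, dist (c i) (c (i + 1)) < Δ / L) :
    ∫ x, |h (φ x) - f x| ∂pT ≤
      (1 + β) * ∫ x, |h (φ x) - f x| ∂pS + 3 * δ1 + 2 * (1 + β) * δ2 + δ3 := by
  classical
  haveI hPTmap : IsProbabilityMeasure (pT.map φ) := Measure.isProbabilityMeasure_map hφ.aemeasurable
  -- closures of images of the label-pure source sets
  set Z0 : Set Z := closure (φ '' C0) with hZ0def
  set Z1 : Set Z := closure (φ '' C1) with hZ1def
  have hZ0m : MeasurableSet Z0 := isClosed_closure.measurableSet
  have hZ1m : MeasurableSet Z1 := isClosed_closure.measurableSet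
  have hZsep : ∀ a ∈ Z0, ∀ b ∈ Z1, Δ ≤ dist a b := by
    intro a ha b hb
    by_contra hlt
    push_neg at hlt
    have hε : (0:ℝ) < (Δ - dist a b) / 2 := by linarith
    obtain ⟨a', ha', haa'⟩ := Metric.mem_closure_iff.1 ha _ hε
    obtain ⟨b', hb', hbb'⟩ := Metric.mem_closure_iff.1 hb _ hε
    obtain ⟨x0, hx0, rfl⟩ := ha'
    obtain ⟨x1, hx1, rfl⟩ := hb'
    have hs := hsep x0 hx0 x1 hx1
    have ht1 : dist (φ x0) (φ x1) ≤ dist (φ x0) a + dist a (φ x1) := dist_triangle _ _ _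
    have ht2 : dist a (φ x1) ≤ dist a b + dist b (φ x1) := dist_triangle _ _ _
    have e1 : dist (φ x0) a = dist a (φ x0) := dist_comm _ _
    have e2 : dist b (φ x1) = dist b (φ x1) := rfl
    linarith
  have hZdisj : ∀ z, z ∈ Z0 → z ∈ Z1 → False := by
    intro z h0 h1
    have h2 := hZsep z h0 z h1
    simp at h2
    linarith
  -- nonnegativity of the deltas
  have hδ1 : 0 ≤ δ1 := by
    have h1 : ENNReal.ofReal (1 - δ1) ≤ 1 := hBmass.trans prob_le_one
    have h2 := ENNReal.ofReal_le_one.1 h1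
    linarith
  have hδ2 : 0 ≤ δ2 := by
    have h1 : ENNReal.ofReal (1 - δ2) ≤ 1 := hCmass.trans prob_le_one
    have h2 := ENNReal.ofReal_le_one.1 h1
    linarith
  -- density ratio on measurable subsets of B
  have hratio' : ∀ s : Set Z, MeasurableSet s → s ⊆ B →
      pT.map φ s ≤ ENNReal.ofReal (1 + β) * pS.map φ s := by
    intro s hs hsB
    have h1 := Measure.le_iff.1 hratio s hs
    rw [Measure.restrict_apply hs, Measure.smul_apply, Measure.restrict_apply hs,
      Set.inter_eq_self_of_subset_left hsB, smul_eq_mul] at h1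
    exact h1
  -- Step A: the target mass of B_T := φ⁻¹(B ∩ (Z0 ∪ Z1))
  have hMm : MeasurableSet (φ ⁻¹' (B \ (Z0 ∪ Z1))) := hφ (hB.diff (hZ0m.union hZ1m))
  have hMdisjS : ∀ x ∈ C0 ∪ C1, x ∉ φ ⁻¹' (B \ (Z0 ∪ Z1)) := by
    intro x hx hxM
    rcases hx with hx | hx
    · exact hxM.2 (Or.inl (subset_closure ⟨x, hx, rfl⟩))
    · exact hxM.2 (Or.inr (subset_closure ⟨x, hx, rfl⟩))
  have hMsmall : pS (φ ⁻¹' (B \ (Z0 ∪ Z1))) ≤ ENNReal.ofReal δ2 :=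
    aux_compl pS hMm hMdisjS hδ2 hCmass
  have hTM : pT (φ ⁻¹' (B \ (Z0 ∪ Z1))) ≤ ENNReal.ofReal ((1 + β) * δ2) := by
    have e1 : pT (φ ⁻¹' (B \ (Z0 ∪ Z1))) = pT.map φ (B \ (Z0 ∪ Z1)) :=
      (Measure.map_apply hφ (hB.diff (hZ0m.union hZ1m))).symm
    have e2 : pS.map φ (B \ (Z0 ∪ Z1)) = pS (φ ⁻¹' (B \ (Z0 ∪ Z1))) :=
      Measure.map_apply hφ (hB.diff (hZ0m.union hZ1m))
    calc pT (φ ⁻¹' (B \ (Z0 ∪ Z1))) = pT.map φ (B \ (Z0 ∪ Z1)) := e1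
      _ ≤ ENNReal.ofReal (1 + β) * pS.map φ (B \ (Z0 ∪ Z1)) :=
          hratio' _ (hB.diff (hZ0m.union hZ1m)) Set.diff_subset
      _ ≤ ENNReal.ofReal (1 + β) * ENNReal.ofReal δ2 := by
          rw [e2]; exact mul_le_mul_right hMsmall _
      _ = ENNReal.ofReal ((1 + β) * δ2) := (ENNReal.ofReal_mul (by linarith)).symm
  have hBTmass : ENNReal.ofReal (1 - δ1 - (1 + β) * δ2) ≤ pT (φ ⁻¹' (B ∩ (Z0 ∪ Z1))) := by
    have hsplit : pT (φ ⁻¹' B) ≤ pT (φ ⁻¹' (B ∩ (Z0 ∪ Z1))) + pT (φ ⁻¹' (B \ (Z0 ∪ Z1))) := by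
      have hsub : φ ⁻¹' B ⊆ φ ⁻¹' (B ∩ (Z0 ∪ Z1)) ∪ φ ⁻¹' (B \ (Z0 ∪ Z1)) := by
        intro x hx
        by_cases hz : φ x ∈ Z0 ∪ Z1
        · exact Or.inl ⟨hx, hz⟩
        · exact Or.inr ⟨hx, hz⟩
      exact (measure_mono hsub).trans (measure_union_le _ _)
    have hkey : ENNReal.ofReal (1 - δ1) ≤
        pT (φ ⁻¹' (B ∩ (Z0 ∪ Z1))) + ENNReal.ofReal ((1 + β) * δ2) := by
      calc ENNReal.ofReal (1 - δ1) ≤ pT.map φ B := hBmass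
        _ = pT (φ ⁻¹' B) := Measure.map_apply hφ hB
        _ ≤ pT (φ ⁻¹' (B ∩ (Z0 ∪ Z1))) + pT (φ ⁻¹' (B \ (Z0 ∪ Z1))) := hsplit
        _ ≤ pT (φ ⁻¹' (B ∩ (Z0 ∪ Z1))) + ENNReal.ofReal ((1 + β) * δ2) :=
            add_le_add_right hTM _
    rw [show 1 - δ1 - (1 + β) * δ2 = (1 - δ1) - (1 + β) * δ2 by ring,
      ENNReal.ofReal_sub _ (by positivity)]
    exact tsub_le_iff_right.2 hkey
  -- Step B: apply the connectedness assumption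
  obtain ⟨CT, hCTsub, hCTmass, hchain⟩ :=
    hconn (C0 ∪ C1) (φ ⁻¹' (B ∩ (Z0 ∪ Z1))) hCmass hBTmass
  have hδ3 : 0 ≤ δ3 := by
    have h1 : ENNReal.ofReal (1 - δ3) ≤ 1 := hCTmass.trans prob_le_one
    have h2 := ENNReal.ofReal_le_one.1 h1
    linarith
  -- Step C: label propagation along chains
  have hlabel : ∀ x ∈ CT, φ x ∈ B ∧ (f x = 0 → φ x ∈ Z0) ∧ (f x = 1 → φ x ∈ Z1) := by
    intro x hx
    have hxBZ : φ x ∈ B ∩ (Z0 ∪ Z1) := hCTsub hx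
    obtain ⟨x', hx'mem, hfx', m, c, hc0, hcm, hcin, hstep⟩ := hchain x hx
    have hstepZ : ∀ i < m, dist (φ (c i)) (φ (c (i + 1))) < Δ := by
      intro i hi
      have h1 := hLip (c i) (c (i + 1))
      have h2 := hstep i hi
      by_cases hL : 0 < L
      · have h3 : L * dist (c i) (c (i + 1)) < L * (Δ / L) :=
          mul_lt_mul_of_pos_left h2 hL
        rw [mul_div_cancel₀ _ (ne_of_gt hL)] at h3
        linarith
      · push_neg at hL
        have hd : (0:ℝ) ≤ dist (c i) (c (i + 1)) := dist_nonneg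
        nlinarith [dist_nonneg (x := φ (c i)) (y := φ (c (i + 1)))]
    have hmemZ : ∀ i ≤ m, φ (c i) ∈ Z0 ∪ Z1 := fun i hi => (hCTsub (hcin i hi)).2
    have hinv : ∀ i, i ≤ m → ((φ (c i) ∈ Z0) ↔ (φ (c 0) ∈ Z0)) := by
      intro i
      induction i with
      | zero => exact fun _ => Iff.rfl
      | succ n ih =>
        intro hn
        have hn' : n ≤ m := Nat.le_of_succ_le hn
        have hadj : (φ (c (n + 1)) ∈ Z0) ↔ (φ (c n) ∈ Z0) := by
          have hd := hstepZ n (Nat.lt_of_succ_le hn)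
          rcases hmemZ n hn' with h1 | h1 <;> rcases hmemZ (n + 1) hn with h2 | h2
          · exact iff_of_true h2 h1
          · exact absurd (hZsep _ h1 _ h2) (by linarith)
          · exfalso
            have h3 := hZsep _ h2 _ h1
            rw [dist_comm] at h3
            linarith
          · exact iff_of_false (fun hz => hZdisj _ hz h2) (fun hz => hZdisj _ hz h1)
        exact hadj.trans (ih hn')
    have hlab : (φ x' ∈ Z0) ↔ (φ x ∈ Z0) := by
      have h1 := hinv m le_rfl
      rwa [hcm, hc0] at h1
    obtain ⟨hx'CT, hx'BS⟩ := hx'mem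
    refine ⟨hxBZ.1, ?_, ?_⟩
    · intro hf0
      have hx'C0 : x' ∈ C0 := by
        rcases hx'BS with hz | hz
        · exact hz
        · exfalso
          have h1 := hC1 x' hz
          rw [hfx', hf0] at h1
          exact one_ne_zero h1.symm
      exact hlab.1 (subset_closure ⟨x', hx'C0, rfl⟩)
    · intro hf1
      have hx'C1 : x' ∈ C1 := by
        rcases hx'BS with hz | hz
        · exfalso
          have h1 := hC0 x' hz
          rw [hfx', hf1] at h1
          exact one_ne_zero h1
        · exact hz
      have hx'Z1 : φ x' ∈ Z1 := subset_closure ⟨x', hx'C1, rfl⟩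
      have hxnZ0 : φ x ∉ Z0 := fun hz => hZdisj _ (hlab.2 hz) hx'Z1
      rcases hxBZ.2 with hz | hz
      · exact absurd hz hxnZ0
      · exact hz
  -- Step D: the error sets
  set D : Set X := {x | h (φ x) ≠ f x} with hDdef
  have hDm : MeasurableSet D := by
    have h1 : MeasurableSet {x | h (φ x) = f x} := measurableSet_eq_fun (hh.comp hφ) hf
    simpa [hDdef, Set.compl_setOf] using h1.compl
  set V : Set Z := (B ∩ Z0 ∩ h ⁻¹' {1}) ∪ (B ∩ Z1 ∩ h ⁻¹' {0}) with hVdef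
  have hVm : MeasurableSet V :=
    ((hB.inter hZ0m).inter (hh (measurableSet_singleton _))).union
      ((hB.inter hZ1m).inter (hh (measurableSet_singleton _)))
  have hVB : V ⊆ B := by
    rintro z (⟨⟨hz, _⟩, _⟩ | ⟨⟨hz, _⟩, _⟩) <;> exact hz
  -- erroneous target points in CT land in V
  have hDCT : ∀ x ∈ CT, x ∈ D → φ x ∈ V := by
    intro x hxCT hxD
    obtain ⟨hxB, h0, h1⟩ := hlabel x hxCT
    rcases hf01 x with hfx | hfx
    · have hhx : h (φ x) = 1 := by
        rcases hh01 (φ x) with hhx | hhx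
        · exact absurd (by rw [hhx, hfx] : h (φ x) = f x) hxD
        · exact hhx
      exact Or.inl ⟨⟨hxB, h0 hfx⟩, hhx⟩
    · have hhx : h (φ x) = 0 := by
        rcases hh01 (φ x) with hhx | hhx
        · exact hhx
        · exact absurd (by rw [hhx, hfx] : h (φ x) = f x) hxD
      exact Or.inr ⟨⟨hxB, h1 hfx⟩, hhx⟩
  -- pT (D \ φ⁻¹ V) ≤ δ3
  have hb1 : pT (D \ φ ⁻¹' V) ≤ ENNReal.ofReal δ3 := by
    refine aux_compl pT (hDm.diff (hφ hVm)) ?_ hδ3 hCTmass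
    intro x hxCT hxM
    exact hxM.2 (hDCT x hxCT hxM.1)
  -- pS (φ⁻¹ V \ D) ≤ δ2
  have hb2 : pS (φ ⁻¹' V \ D) ≤ ENNReal.ofReal δ2 := by
    refine aux_compl pS ((hφ hVm).diff hDm) ?_ hδ2 hCmass
    intro x hxBS hxM
    obtain ⟨hxV, hxnD⟩ := hxM
    have hxfe : h (φ x) = f x := not_not.1 hxnD
    rcases hxV with ⟨⟨_, hz0⟩, hh1⟩ | ⟨⟨_, hz1⟩, hh0⟩
    · rcases hxBS with hx0 | hx1
      · have h1 := hC0 x hx0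
        rw [h1] at hxfe
        rw [Set.mem_preimage, Set.mem_singleton_iff] at hh1
        rw [hh1] at hxfe
        exact one_ne_zero hxfe
      · exact hZdisj _ hz0 (subset_closure ⟨x, hx1, rfl⟩)
    · rcases hxBS with hx0 | hx1
      · exact hZdisj _ (subset_closure ⟨x, hx0, rfl⟩) hz1
      · have h1 := hC1 x hx1
        rw [h1] at hxfe
        rw [Set.mem_preimage, Set.mem_singleton_iff] at hh0
        rw [hh0] at hxfe
        exact one_ne_zero hxfe.symm
  -- pS (φ⁻¹ V) ≤ pS D + δ2
  have hb3 : pS (φ ⁻¹' V) ≤ pS D + ENNReal.ofReal δ2 := by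
    calc pS (φ ⁻¹' V) ≤ pS (φ ⁻¹' V ∩ D) + pS (φ ⁻¹' V \ D) :=
          le_of_eq (measure_inter_add_diff _ hDm).symm
      _ ≤ pS D + ENNReal.ofReal δ2 :=
          add_le_add (measure_mono Set.inter_subset_right) hb2
  -- transfer through the density-ratio bound
  have hb4 : pT (φ ⁻¹' V) ≤ ENNReal.ofReal (1 + β) * pS D + ENNReal.ofReal ((1 + β) * δ2) := by
    calc pT (φ ⁻¹' V) = pT.map φ V := (Measure.map_apply hφ hVm).symm
      _ ≤ ENNReal.ofReal (1 + β) * pS.map φ V := hratio' V hVm hVB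
      _ = ENNReal.ofReal (1 + β) * pS (φ ⁻¹' V) := by rw [Measure.map_apply hφ hVm]
      _ ≤ ENNReal.ofReal (1 + β) * (pS D + ENNReal.ofReal δ2) := mul_le_mul_right hb3 _
      _ = ENNReal.ofReal (1 + β) * pS D + ENNReal.ofReal (1 + β) * ENNReal.ofReal δ2 := by
          rw [mul_add]
      _ = ENNReal.ofReal (1 + β) * pS D + ENNReal.ofReal ((1 + β) * δ2) := by
          rw [ENNReal.ofReal_mul (by linarith)]
  -- the main ENNReal bound
  have hmain : pT D ≤ ENNReal.ofReal (1 + β) * pS D + ENNReal.ofReal ((1 + β) * δ2)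
      + ENNReal.ofReal δ3 := by
    calc pT D ≤ pT (D ∩ φ ⁻¹' V) + pT (D \ φ ⁻¹' V) :=
          le_of_eq (measure_inter_add_diff _ (hφ hVm)).symm
      _ ≤ pT (φ ⁻¹' V) + ENNReal.ofReal δ3 :=
          add_le_add (measure_mono Set.inter_subset_right) hb1
      _ ≤ ENNReal.ofReal (1 + β) * pS D + ENNReal.ofReal ((1 + β) * δ2) + ENNReal.ofReal δ3 :=
          add_le_add_left hb4 _
  -- integral identities
  have hfun : (fun x => |h (φ x) - f x|) = D.indicator (fun _ => (1:ℝ)) := by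
    funext x
    by_cases hx : h (φ x) = f x
    · have hxD : x ∉ D := not_not.2 hx
      simp [Set.indicator_of_notMem hxD, hx]
    · have hxD : x ∈ D := hx
      rw [Set.indicator_of_mem hxD]
      rcases hh01 (φ x) with h0 | h0 <;> rcases hf01 x with f0 | f0 <;>
        simp [h0, f0] at hx ⊢
  have hIT : ∫ x, |h (φ x) - f x| ∂pT = (pT D).toReal := by
    rw [hfun, integral_indicator hDm, setIntegral_const]
    simp
    rfl
  have hIS : ∫ x, |h (φ x) - f x| ∂pS = (pS D).toReal := by
    rw [hfun, integral_indicator hDm, setIntegral_const]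
    simp
    rfl
  rw [hIT, hIS]
  -- pass to real numbers
  have hfin : ENNReal.ofReal (1 + β) * pS D + ENNReal.ofReal ((1 + β) * δ2)
      + ENNReal.ofReal δ3 ≠ ⊤ := by
    apply ENNReal.add_ne_top.2
    refine ⟨ENNReal.add_ne_top.2 ⟨?_, ENNReal.ofReal_ne_top⟩, ENNReal.ofReal_ne_top⟩
    exact ENNReal.mul_ne_top ENNReal.ofReal_ne_top (measure_ne_top _ _)
  have hR := ENNReal.toReal_mono hfin hmain
  have hRHS : (ENNReal.ofReal (1 + β) * pS D + ENNReal.ofReal ((1 + β) * δ2)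
      + ENNReal.ofReal δ3).toReal = (1 + β) * (pS D).toReal + (1 + β) * δ2 + δ3 := by
    rw [ENNReal.toReal_add (ENNReal.add_ne_top.2
        ⟨ENNReal.mul_ne_top ENNReal.ofReal_ne_top (measure_ne_top _ _), ENNReal.ofReal_ne_top⟩)
        ENNReal.ofReal_ne_top,
      ENNReal.toReal_add (ENNReal.mul_ne_top ENNReal.ofReal_ne_top (measure_ne_top _ _))
        ENNReal.ofReal_ne_top,
      ENNReal.toReal_mul, ENNReal.toReal_ofReal (by linarith : (0:ℝ) ≤ 1 + β),
      ENNReal.toReal_ofReal (by positivity), ENNReal.toReal_ofReal hδ3]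
  rw [hRHS] at hR
  nlinarith [hR, mul_nonneg (by linarith : (0:ℝ) ≤ 1 + β) hδ2]
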